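/- For the entropy function g(N) = (N+1)ln(N+1) - N ln N, the composite function x ↦ g⁻¹(ln x) is increasing and convex on [1,∞); consequently, for any 0 ≤ λ ≤ 1 and any N_1, N_2 ≥ 0, g⁻¹(ln(λ e^{g(N_1)} + (1-λ) e^{g(N_2)})) ≤ λ N_1 + (1-λ) N_2. -/

import Mathlib

open Real Set

/-- The entropy function `g(N) = (N+1) log (N+1) - N log N` (with `g 0 = 0`). -/
noncomputable def gfun (N : ℝ) : ℝ := (N + 1) * Real.log (N + 1) - N * Real.log N

private lemma two_log_le (t : ℝ) (ht : 1 ≤ t) : 2 * Real.log t ≤ t - t⁻¹ := by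
  set φ : ℝ → ℝ := fun s => s - s⁻¹ - 2 * Real.log s with hφ
  have key : MonotoneOn φ (Ici 1) := by
    have hder : ∀ s : ℝ, 0 < s → HasDerivAt φ (1 + (s^2)⁻¹ - 2 * s⁻¹) s := by
      intro s hs
      have h1 : HasDerivAt (fun x : ℝ => x - x⁻¹) (1 - -(s^2)⁻¹) s :=
        (hasDerivAt_id s).sub (hasDerivAt_inv hs.ne')
      have h2 : HasDerivAt (fun x : ℝ => 2 * Real.log x) (2 * s⁻¹) s :=
        (Real.hasDerivAt_log hs.ne').const_mul 2
      have := h1.sub h2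
      exact this.congr_deriv (by ring)
    apply monotoneOn_of_deriv_nonneg (convex_Ici 1)
    · intro s hs
      exact ((hder s (lt_of_lt_of_le one_pos hs)).continuousAt).continuousWithinAt
    · intro s hs
      rw [interior_Ici] at hs
      exact ((hder s (lt_trans one_pos hs)).differentiableAt).differentiableWithinAt
    · intro s hs
      rw [interior_Ici] at hs
      have hs0 : (0:ℝ) < s := lt_trans one_pos hs
      rw [(hder s hs0).deriv]
      have h2s : (0:ℝ) < s^2 := by positivity
      have heq : 1 + (s^2)⁻¹ - 2*s⁻¹ = (s-1)^2/s^2 := by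
        field_simp
        ring
      rw [heq]
      positivity
  have h0 : φ 1 ≤ φ t := key self_mem_Ici ht ht
  have h1 : φ 1 = 0 := by simp [hφ]
  rw [h1] at h0
  simp only [hφ] at h0
  linarith

private lemma log_ratio_sq (N : ℝ) (hN : 0 < N) :
    (Real.log (N+1) - Real.log N)^2 ≤ (N*(N+1))⁻¹ := by
  set t := Real.sqrt ((N+1)/N) with htdef
  have hfrac : (1:ℝ) ≤ (N+1)/N := by
    rw [le_div_iff₀ hN]; linarith
  have ht1 : 1 ≤ t := by
    have h := Real.sqrt_le_sqrt hfrac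
    rwa [Real.sqrt_one] at h
  have ht0 : 0 < t := lt_of_lt_of_le one_pos ht1
  have htsq : t^2 = (N+1)/N := Real.sq_sqrt (by positivity)
  have hlog : Real.log (N+1) - Real.log N = 2 * Real.log t := by
    rw [htdef, Real.log_sqrt (by positivity), ← Real.log_div (by linarith) hN.ne']
    ring
  have hkey := two_log_le t ht1
  have hlognn : 0 ≤ 2 * Real.log t := by
    have := Real.log_nonneg ht1; linarith
  have hsq : (2 * Real.log t)^2 ≤ (t - t⁻¹)^2 := pow_le_pow_left₀ hlognn hkey 2
  have heq : (t - t⁻¹)^2 = (N*(N+1))⁻¹ := by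
    have h1 : (t - t⁻¹)^2 = t^2 - 2 + (t⁻¹)^2 := by
      have hm : t * t⁻¹ = 1 := mul_inv_cancel₀ ht0.ne'
      nlinarith [hm]
    have ht2 : (t⁻¹)^2 = N/(N+1) := by
      rw [inv_pow, htsq, inv_div]
    rw [h1, htsq, ht2]
    field_simp
    ring
  rw [hlog, ← heq]
  exact hsq

private lemma gfun_hasDerivAt (N : ℝ) (hN : 0 < N) :
    HasDerivAt gfun (Real.log (N+1) - Real.log N) N := by
  have h1 : HasDerivAt (fun x : ℝ => (x + 1) * Real.log (x + 1))
      (1 * Real.log (N+1) + (N+1) * ((N+1)⁻¹)) N := by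
    have ha : HasDerivAt (fun x : ℝ => x + 1) 1 N := (hasDerivAt_id N).add_const 1
    have hb : HasDerivAt (fun x : ℝ => Real.log (x + 1)) ((N+1)⁻¹) N := by
      have := (Real.hasDerivAt_log (by linarith : N + 1 ≠ 0)).comp N ha
      simpa [Function.comp_def] using this
    exact ha.mul hb
  have h2 : HasDerivAt (fun x : ℝ => x * Real.log x) (1 * Real.log N + N * N⁻¹) N :=
    (hasDerivAt_id N).mul (Real.hasDerivAt_log hN.ne')
  have := h1.sub h2
  exact this.congr_deriv (by
    rw [mul_inv_cancel₀ (by linarith : N + 1 ≠ 0), mul_inv_cancel₀ hN.ne']; ring)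

private lemma gfun_continuous : Continuous gfun := by
  have h1 : Continuous fun x : ℝ => (x+1) * Real.log (x+1) :=
    (Real.continuous_mul_log.comp (continuous_id.add continuous_const))
  exact h1.sub Real.continuous_mul_log

private lemma gfun_strictMono : StrictMonoOn gfun (Ici 0) := by
  apply strictMonoOn_of_deriv_pos (convex_Ici 0) gfun_continuous.continuousOn
  intro N hN
  rw [interior_Ici] at hN
  rw [(gfun_hasDerivAt N hN).deriv]
  have : Real.log N < Real.log (N+1) := Real.log_lt_log hN (by linarith)
  linarith

private lemma gfun_zero : gfun 0 = 0 := by simp [gfun]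

private lemma gfun_nonneg {N : ℝ} (hN : 0 ≤ N) : 0 ≤ gfun N := by
  rcases eq_or_lt_of_le hN with h | h
  · rw [← h, gfun_zero]
  · rw [← gfun_zero]
    exact le_of_lt (gfun_strictMono self_mem_Ici hN h)

private lemma F_hasDerivAt (N : ℝ) (hN : 0 < N) :
    HasDerivAt (fun x => Real.exp (gfun x))
      (Real.exp (gfun N) * (Real.log (N+1) - Real.log N)) N :=
  (gfun_hasDerivAt N hN).exp

private lemma lr_hasDerivAt (N : ℝ) (hN : 0 < N) :
    HasDerivAt (fun x : ℝ => Real.log (x+1) - Real.log x) ((N+1)⁻¹ - N⁻¹) N := by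
  have ha : HasDerivAt (fun x : ℝ => x + 1) 1 N := (hasDerivAt_id N).add_const 1
  have hb : HasDerivAt (fun x : ℝ => Real.log (x + 1)) ((N+1)⁻¹) N := by
    have := (Real.hasDerivAt_log (by linarith : N + 1 ≠ 0)).comp N ha
    simpa [Function.comp_def] using this
  exact hb.sub (Real.hasDerivAt_log hN.ne')

private lemma G_hasDerivAt (N : ℝ) (hN : 0 < N) :
    HasDerivAt (fun x => Real.exp (gfun x) * (Real.log (x+1) - Real.log x))
      (Real.exp (gfun N) * (Real.log (N+1) - Real.log N) * (Real.log (N+1) - Real.log N)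
        + Real.exp (gfun N) * ((N+1)⁻¹ - N⁻¹)) N :=
  (F_hasDerivAt N hN).mul (lr_hasDerivAt N hN)

private lemma G_antitone :
    AntitoneOn (fun x => Real.exp (gfun x) * (Real.log (x+1) - Real.log x)) (Ioi 0) := by
  apply antitoneOn_of_deriv_nonpos (convex_Ioi 0)
  · intro x hx
    exact (G_hasDerivAt x hx).continuousAt.continuousWithinAt
  · intro x hx
    rw [interior_Ioi] at hx
    exact (G_hasDerivAt x hx).differentiableAt.differentiableWithinAt
  · intro x hx
    rw [interior_Ioi] at hx
    rw [(G_hasDerivAt x hx).deriv]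
    have h1 := log_ratio_sq x hx
    have h2 : (x+1)⁻¹ - x⁻¹ = -(x*(x+1))⁻¹ := by
      have hx0 : (0:ℝ) < x := hx
      have hxne : x ≠ 0 := hx0.ne'
      have hx1ne : x + 1 ≠ 0 := by linarith
      have hne : x*(x+1) ≠ 0 := mul_ne_zero hxne hx1ne
      have key : ((x+1)⁻¹ - x⁻¹) * (x*(x+1)) = -1 := by
        field_simp
        ring
      have := eq_div_of_mul_eq hne key
      rw [this, neg_div, one_div]
    have h3 : (0:ℝ) < Real.exp (gfun x) := Real.exp_pos _
    have h4 : (Real.log (x+1) - Real.log x)^2 + ((x+1)⁻¹ - x⁻¹) ≤ 0 := by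
      rw [h2]; linarith
    nlinarith [sq_nonneg (Real.log (x+1) - Real.log x)]

private lemma F_concave : ConcaveOn ℝ (Ici 0) (fun N => Real.exp (gfun N)) := by
  apply AntitoneOn.concaveOn_of_deriv (convex_Ici 0)
  · exact (Real.continuous_exp.comp gfun_continuous).continuousOn
  · intro x hx
    rw [interior_Ici] at hx
    exact (F_hasDerivAt x hx).differentiableAt.differentiableWithinAt
  · rw [interior_Ici]
    intro a ha b hb hab
    rw [(F_hasDerivAt a ha).deriv, (F_hasDerivAt b hb).deriv]
    exact G_antitone ha hb hab

/-- The function `x ↦ g⁻¹(log x)` is increasing and convex on `[1,∞)`; consequently, for any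
`0 ≤ λ ≤ 1` and `N₁, N₂ ≥ 0`,
`g⁻¹(log (λ e^{g N₁} + (1-λ) e^{g N₂})) ≤ λ N₁ + (1-λ) N₂`. -/
theorem ginv_log_convex_and_epni_stronger
    (ginv : ℝ → ℝ)
    (hginv_left : ∀ N : ℝ, 0 ≤ N → ginv (gfun N) = N)
    (hginv_right : ∀ S : ℝ, 0 ≤ S → 0 ≤ ginv S ∧ gfun (ginv S) = S) :
    MonotoneOn (fun x : ℝ => ginv (Real.log x)) (Set.Ici 1) ∧
    ConvexOn ℝ (Set.Ici 1) (fun x : ℝ => ginv (Real.log x)) ∧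
    ∀ lam : ℝ, 0 ≤ lam → lam ≤ 1 → ∀ N₁ N₂ : ℝ, 0 ≤ N₁ → 0 ≤ N₂ →
      ginv (Real.log (lam * Real.exp (gfun N₁) + (1 - lam) * Real.exp (gfun N₂)))
        ≤ lam * N₁ + (1 - lam) * N₂ := by
  have hmono : MonotoneOn (fun x : ℝ => ginv (Real.log x)) (Set.Ici 1) := by
    intro x hx y hy hxy
    have hx1 : (1:ℝ) ≤ x := hx
    have hy1 : (1:ℝ) ≤ y := hy
    obtain ⟨hA, hgA⟩ := hginv_right (Real.log x) (Real.log_nonneg hx1)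
    obtain ⟨hB, hgB⟩ := hginv_right (Real.log y) (Real.log_nonneg hy1)
    apply (gfun_strictMono.le_iff_le hA hB).mp
    rw [hgA, hgB]
    exact Real.log_le_log (by linarith) hxy
  have hconv : ConvexOn ℝ (Set.Ici 1) (fun x : ℝ => ginv (Real.log x)) := by
    refine ⟨convex_Ici 1, ?_⟩
    intro x hx y hy a b ha hb hab
    simp only [smul_eq_mul]
    have hx1 : (1:ℝ) ≤ x := hx
    have hy1 : (1:ℝ) ≤ y := hy
    obtain ⟨hA, hgA⟩ := hginv_right (Real.log x) (Real.log_nonneg hx1)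
    obtain ⟨hB, hgB⟩ := hginv_right (Real.log y) (Real.log_nonneg hy1)
    have hFx : Real.exp (gfun (ginv (Real.log x))) = x := by
      rw [hgA]; exact Real.exp_log (by linarith)
    have hFy : Real.exp (gfun (ginv (Real.log y))) = y := by
      rw [hgB]; exact Real.exp_log (by linarith)
    have hcomb : (1:ℝ) ≤ a * x + b * y := by
      have h1 : a * 1 ≤ a * x := mul_le_mul_of_nonneg_left hx1 ha
      have h2 : b * 1 ≤ b * y := mul_le_mul_of_nonneg_left hy1 hb
      linarith
    have hconc := F_concave.2 (mem_Ici.mpr hA) (mem_Ici.mpr hB) ha hb hab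
    simp only [smul_eq_mul] at hconc
    rw [hFx, hFy] at hconc
    -- hconc : a * x + b * y ≤ exp (gfun (a * ginv (log x) + b * ginv (log y)))
    have hlog : Real.log (a * x + b * y)
        ≤ gfun (a * ginv (Real.log x) + b * ginv (Real.log y)) := by
      have := Real.log_le_log (by linarith) hconc
      rwa [Real.log_exp] at this
    obtain ⟨hC, hgC⟩ := hginv_right (Real.log (a * x + b * y)) (Real.log_nonneg hcomb)
    have hcombN : 0 ≤ a * ginv (Real.log x) + b * ginv (Real.log y) := by positivity
    apply (gfun_strictMono.le_iff_le hC hcombN).mp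
    rw [hgC]
    exact hlog
  refine ⟨hmono, hconv, ?_⟩
  intro lam h0 h1 N₁ N₂ hN₁ hN₂
  have hx : Real.exp (gfun N₁) ∈ Set.Ici (1:ℝ) :=
    mem_Ici.mpr (Real.one_le_exp (gfun_nonneg hN₁))
  have hy : Real.exp (gfun N₂) ∈ Set.Ici (1:ℝ) :=
    mem_Ici.mpr (Real.one_le_exp (gfun_nonneg hN₂))
  have := hconv.2 hx hy h0 (by linarith : (0:ℝ) ≤ 1 - lam) (by ring)
  simp only [smul_eq_mul, Real.log_exp] at this
  rwa [hginv_left N₁ hN₁, hginv_left N₂ hN₂] at this
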